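/- Let $\mathcal{X}$ be a $d$-dimensional tropical fan (weighted balanced fan) with unimodular fan structure, and $\sigma$ a maximal cone with primitive ray generators $v_1,\ldots,v_d$ and weight $\omega(\sigma)$. Then the iterated intersection product $\Psi_{v_1}\cdots\Psi_{v_d}\cdot\mathcal{X}$ equals the origin with weight $\omega(\sigma)$. -/

import Mathlib

/-- The real vector associated to the primitive integral generator of the `i`-th ray. -/
def rayR (n m : ℕ) (v : Fin m → Fin n → ℤ) (i : Fin m) : Fin n → ℝ :=
  fun t => (v i t : ℝ)

/-- The cone spanned by the rays indexed by `S`. -/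
def coneOf (n m : ℕ) (v : Fin m → Fin n → ℤ) (S : Finset (Fin m)) : Set (Fin n → ℝ) :=
  {x | ∃ a : Fin m → ℝ, (∀ i, 0 ≤ a i) ∧ x = ∑ i ∈ S, a i • rayR n m v i}

/-- One step of the tropical intersection product: intersecting the weighted fan with
weight function `W` with a rational function whose linear parts on the cones are given
by `L`; the weight of the cone `τ` in the intersection is
`∑_{σ>τ} W(σ)·L_σ(v_{σ/τ}) - L_τ(∑_{σ>τ} W(σ)·v_{σ/τ})`, the normal vectors of the
unimodular fan being represented by the primitive ray generators. -/
def stepW (n m : ℕ) (v : Fin m → Fin n → ℤ) (C : Finset (Finset (Fin m)))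
    (L : Finset (Fin m) → ((Fin n → ℝ) →ₗ[ℝ] ℝ)) (W : Finset (Fin m) → ℝ) :
    Finset (Fin m) → ℝ :=
  fun τ =>
    (∑ j ∈ Finset.univ.filter (fun j => j ∉ τ ∧ insert j τ ∈ C),
      W (insert j τ) * L (insert j τ) (rayR n m v j)) -
    L τ (∑ j ∈ Finset.univ.filter (fun j => j ∉ τ ∧ insert j τ ∈ C),
      W (insert j τ) • rayR n m v j)

/-- auxiliary: span of the rays of a cone -/
def spanRays (n m : ℕ) (v : Fin m → Fin n → ℤ) (τ : Finset (Fin m)) :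
    Submodule ℝ (Fin n → ℝ) :=
  Submodule.span ℝ (Set.range fun i : {x // x ∈ τ} => rayR n m v i.1)

/-- auxiliary: the index set of cones covering `τ` -/
def Jset (m : ℕ) (C : Finset (Finset (Fin m))) (τ : Finset (Fin m)) : Finset (Fin m) :=
  Finset.univ.filter (fun j => j ∉ τ ∧ insert j τ ∈ C)

lemma mem_Jset {m : ℕ} {C : Finset (Finset (Fin m))} {τ : Finset (Fin m)} {j : Fin m} :
    j ∈ Jset m C τ ↔ j ∉ τ ∧ insert j τ ∈ C := by
  simp [Jset]

/-- auxiliary: the balancing sum at `τ` -/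
def sdef (n m : ℕ) (v : Fin m → Fin n → ℤ) (C : Finset (Finset (Fin m)))
    (W : Finset (Fin m) → ℝ) (τ : Finset (Fin m)) : Fin n → ℝ :=
  ∑ j ∈ Jset m C τ, W (insert j τ) • rayR n m v j

lemma stepW_eq (n m : ℕ) (v : Fin m → Fin n → ℤ) (C : Finset (Finset (Fin m)))
    (L : Finset (Fin m) → ((Fin n → ℝ) →ₗ[ℝ] ℝ)) (W : Finset (Fin m) → ℝ)
    (τ : Finset (Fin m)) :
    stepW n m v C L W τ =
      (∑ j ∈ Jset m C τ, W (insert j τ) * L (insert j τ) (rayR n m v j)) -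
        L τ (sdef n m v C W τ) := rfl

lemma rayR_range_insert (n m : ℕ) (v : Fin m → Fin n → ℤ) (j : Fin m) (τ : Finset (Fin m)) :
    (Set.range fun i : {x // x ∈ insert j τ} => rayR n m v i.1) =
      insert (rayR n m v j) (Set.range fun i : {x // x ∈ τ} => rayR n m v i.1) := by
  ext x
  simp only [Set.mem_insert_iff, Set.mem_range]
  constructor
  · rintro ⟨⟨i, hi⟩, rfl⟩
    rcases Finset.mem_insert.1 hi with rfl | hi
    · exact Or.inl rfl
    · exact Or.inr ⟨⟨i, hi⟩, rfl⟩
  · rintro (rfl | ⟨⟨i, hi⟩, rfl⟩)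
    · exact ⟨⟨j, Finset.mem_insert_self j τ⟩, rfl⟩
    · exact ⟨⟨i, Finset.mem_insert_of_mem hi⟩, rfl⟩

lemma exists_decomp {n m : ℕ} {v : Fin m → Fin n → ℤ} {j : Fin m} {τ : Finset (Fin m)}
    {x : Fin n → ℝ} (hx : x ∈ spanRays n m v (insert j τ)) :
    ∃ c : ℝ, x - c • rayR n m v j ∈ spanRays n m v τ := by
  rw [spanRays, rayR_range_insert, Submodule.mem_span_insert] at hx
  obtain ⟨c, z, hz, rfl⟩ := hx
  exact ⟨c, by simpa [spanRays] using hz⟩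

lemma exists_dual {n m : ℕ} {v : Fin m → Fin n → ℤ} {τ : Finset (Fin m)}
    (hli : LinearIndependent ℝ (fun i : {x // x ∈ τ} => rayR n m v i.1)) (i0 : Fin m) :
    ∃ f : (Fin n → ℝ) →ₗ[ℝ] ℝ, ∀ i ∈ τ, f (rayR n m v i) = if i = i0 then 1 else 0 := by
  by_cases hi0 : i0 ∈ τ
  · obtain ⟨f, hf⟩ := LinearMap.exists_extend ((Module.Basis.span hli).coord ⟨i0, hi0⟩)
    refine ⟨f, fun i hi => ?_⟩
    have h1 := congrArg (fun g => g ((Module.Basis.span hli) ⟨i, hi⟩)) hf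
    simp only [LinearMap.comp_apply, Submodule.subtype_apply] at h1
    rw [Module.Basis.span_apply] at h1
    rw [h1, Module.Basis.coord_apply, show (⟨rayR n m v ↑(⟨i, hi⟩ : {x // x ∈ τ}),
      Submodule.subset_span (Set.mem_range_self _)⟩ : Submodule.span ℝ
        (Set.range fun i : {x // x ∈ τ} => rayR n m v i.1)) = Module.Basis.span hli ⟨i, hi⟩ from
      (Module.Basis.span_apply hli _).symm, Module.Basis.repr_self, Finsupp.single_apply]
    by_cases h : i = i0
    · subst h; simp
    · rw [if_neg (by simpa [Subtype.ext_iff] using h), if_neg h]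
  · refine ⟨0, fun i hi => ?_⟩
    rw [if_neg (fun h : i = i0 => hi0 (h ▸ hi))]
    simp

lemma bal_step (n m : ℕ) (v : Fin m → Fin n → ℤ) (C : Finset (Finset (Fin m)))
    (hdown : ∀ S ∈ C, ∀ T ⊆ S, T ∈ C)
    (hsimp : ∀ S ∈ C, LinearIndependent ℝ (fun i : {x // x ∈ S} => rayR n m v i.1))
    (i0 : Fin m) (L : Finset (Fin m) → ((Fin n → ℝ) →ₗ[ℝ] ℝ))
    (hL : ∀ T ∈ C, ∀ j ∈ T, L T (rayR n m v j) = if j = i0 then 1 else 0)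
    (W : Finset (Fin m) → ℝ) (τ : Finset (Fin m)) (hτ : τ ∈ C)
    (hW : ∀ j ∉ τ, insert j τ ∈ C →
      sdef n m v C W (insert j τ) ∈ spanRays n m v (insert j τ)) :
    sdef n m v C (stepW n m v C L W) τ ∈ spanRays n m v τ := by
  classical
  -- pair symmetry
  have hpair : ∀ j k : Fin m,
      ((j ∉ τ ∧ insert j τ ∈ C) ∧ (k ∉ insert j τ ∧ insert k (insert j τ) ∈ C)) →
      ((k ∉ τ ∧ insert k τ ∈ C) ∧ (j ∉ insert k τ ∧ insert j (insert k τ) ∈ C)) := by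
    rintro j k ⟨hj, hk⟩
    have hkτ : k ∉ τ := fun h => hk.1 (Finset.mem_insert_of_mem h)
    have hkj : k ≠ j := fun h => hk.1 (h ▸ Finset.mem_insert_self j τ)
    have hcomm : insert j (insert k τ) = insert k (insert j τ) := Finset.insert_comm j k τ
    have hkC : insert k τ ∈ C :=
      hdown _ hk.2 _ (Finset.insert_subset_insert k (Finset.subset_insert j τ))
    refine ⟨⟨hkτ, hkC⟩, ⟨?_, by rw [hcomm]; exact hk.2⟩⟩
    intro hmem
    rcases Finset.mem_insert.1 hmem with h | h
    · exact hkj h.symm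
    · exact hj.1 h
  -- decomposition coefficients
  have hdecomp : ∀ j : Fin m, ∃ c : ℝ, j ∉ τ → insert j τ ∈ C →
      sdef n m v C W (insert j τ) - c • rayR n m v j ∈ spanRays n m v τ := by
    intro j
    by_cases hj : j ∉ τ ∧ insert j τ ∈ C
    · obtain ⟨c, hc⟩ := exists_decomp (hW j hj.1 hj.2)
      exact ⟨c, fun _ _ => hc⟩
    · exact ⟨0, fun h1 h2 => absurd ⟨h1, h2⟩ hj⟩
  choose lam hlam using hdecomp
  obtain ⟨f, hf⟩ := exists_dual (hsimp τ hτ) i0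
  -- pointwise formula
  have hstep : ∀ j ∈ Jset m C τ, stepW n m v C L W (insert j τ) =
      (if i0 ∈ Jset m C (insert j τ) then W (insert i0 (insert j τ)) else 0)
        - lam j * (if j = i0 then 1 else 0)
        - (f (sdef n m v C W (insert j τ)) - lam j * f (rayR n m v j)) := by
    intro j hj
    rw [mem_Jset] at hj
    have hjC := hj.2
    rw [stepW_eq]
    have h1 : (∑ k ∈ Jset m C (insert j τ),
        W (insert k (insert j τ)) * L (insert k (insert j τ)) (rayR n m v k))
        = (if i0 ∈ Jset m C (insert j τ) then W (insert i0 (insert j τ)) else 0) := by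
      rw [← Finset.sum_ite_eq' (Jset m C (insert j τ)) i0
        (fun k => W (insert k (insert j τ)))]
      refine Finset.sum_congr rfl fun k hk => ?_
      rw [mem_Jset] at hk
      rw [hL _ hk.2 k (Finset.mem_insert_self k (insert j τ))]
      by_cases h : k = i0 <;> simp [h]
    have hr : sdef n m v C W (insert j τ) - lam j • rayR n m v j ∈ spanRays n m v τ :=
      hlam j hj.1 hj.2
    have hLf : ∀ x ∈ spanRays n m v τ, L (insert j τ) x = f x := by
      intro x hx
      have hle : spanRays n m v τ ≤ LinearMap.ker (L (insert j τ) - f) := by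
        rw [spanRays, Submodule.span_le]
        rintro y ⟨⟨i, hi⟩, rfl⟩
        have h3 : L (insert j τ) (rayR n m v i) = if i = i0 then 1 else 0 :=
          hL _ hjC i (Finset.mem_insert_of_mem hi)
        simp [LinearMap.mem_ker, h3, hf i hi]
      have := hle hx
      rw [LinearMap.mem_ker, LinearMap.sub_apply, sub_eq_zero] at this
      exact this
    have h2 : L (insert j τ) (sdef n m v C W (insert j τ)) =
        lam j * (if j = i0 then 1 else 0)
          + (f (sdef n m v C W (insert j τ)) - lam j * f (rayR n m v j)) := by
      calc L (insert j τ) (sdef n m v C W (insert j τ))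
          = L (insert j τ) (lam j • rayR n m v j)
            + L (insert j τ) (sdef n m v C W (insert j τ) - lam j • rayR n m v j) := by
            rw [← map_add]; congr 1; abel
        _ = _ := by
            rw [map_smul, smul_eq_mul, hL _ hjC j (Finset.mem_insert_self j τ), hLf _ hr,
              map_sub, map_smul, smul_eq_mul]
    rw [h1, h2]; ring
  -- rewrite the goal sum
  rw [sdef]
  rw [Finset.sum_congr rfl (fun j hj => by rw [hstep j hj])]
  have hsplit : (∑ j ∈ Jset m C τ,
      ((if i0 ∈ Jset m C (insert j τ) then W (insert i0 (insert j τ)) else 0)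
        - lam j * (if j = i0 then 1 else 0)
        - (f (sdef n m v C W (insert j τ)) - lam j * f (rayR n m v j))) • rayR n m v j)
      = ((∑ j ∈ Jset m C τ,
            (if i0 ∈ Jset m C (insert j τ) then W (insert i0 (insert j τ)) else 0) • rayR n m v j)
          - (∑ j ∈ Jset m C τ, (lam j * (if j = i0 then 1 else 0)) • rayR n m v j))
        - (∑ j ∈ Jset m C τ,
            (f (sdef n m v C W (insert j τ)) - lam j * f (rayR n m v j)) • rayR n m v j) := by
    rw [← Finset.sum_sub_distrib, ← Finset.sum_sub_distrib]
    refine Finset.sum_congr rfl fun j _ => ?_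
    rw [sub_smul, sub_smul]
  rw [hsplit]
  refine Submodule.sub_mem _ ?_ ?_
  · -- T1 - T2 ∈ span
    by_cases hi0τ : i0 ∈ τ
    · have hT1 : (∑ j ∈ Jset m C τ,
          (if i0 ∈ Jset m C (insert j τ) then W (insert i0 (insert j τ)) else 0) • rayR n m v j)
          = 0 := by
        refine Finset.sum_eq_zero fun j hj => ?_
        rw [if_neg, zero_smul]
        rw [mem_Jset]
        push_neg
        intro h
        exact absurd (Finset.mem_insert_of_mem hi0τ) h
      have hT2 : (∑ j ∈ Jset m C τ, (lam j * (if j = i0 then 1 else 0)) • rayR n m v j) = 0 := by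
        refine Finset.sum_eq_zero fun j hj => ?_
        rw [mem_Jset] at hj
        rw [if_neg (fun h : j = i0 => hj.1 (h ▸ hi0τ)), mul_zero, zero_smul]
      rw [hT1, hT2, sub_zero]
      exact Submodule.zero_mem _
    · by_cases hC0 : insert i0 τ ∈ C
      · have hi0J : i0 ∈ Jset m C τ := mem_Jset.2 ⟨hi0τ, hC0⟩
        have hT2 : (∑ j ∈ Jset m C τ, (lam j * (if j = i0 then 1 else 0)) • rayR n m v j)
            = lam i0 • rayR n m v i0 := by
          rw [Finset.sum_congr rfl (fun j _ => show (lam j * (if j = i0 then 1 else 0)) • rayR n m v j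
              = if j = i0 then lam j • rayR n m v j else 0 by
            by_cases h : j = i0 <;> simp [h])]
          rw [Finset.sum_ite_eq' (Jset m C τ) i0 (fun j => lam j • rayR n m v j), if_pos hi0J]
        have hT1 : (∑ j ∈ Jset m C τ,
            (if i0 ∈ Jset m C (insert j τ) then W (insert i0 (insert j τ)) else 0) • rayR n m v j)
            = sdef n m v C W (insert i0 τ) := by
          rw [Finset.sum_congr rfl (fun j _ =>
            show (if i0 ∈ Jset m C (insert j τ) then W (insert i0 (insert j τ)) else 0) • rayR n m v j
              = if i0 ∈ Jset m C (insert j τ) then W (insert i0 (insert j τ)) • rayR n m v j else 0 by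
            by_cases h : i0 ∈ Jset m C (insert j τ) <;> simp [h])]
          rw [Finset.sum_ite, Finset.sum_const_zero, add_zero]
          rw [sdef]
          have hsets : (Jset m C τ).filter (fun j => i0 ∈ Jset m C (insert j τ))
              = Jset m C (insert i0 τ) := by
            ext j
            rw [Finset.mem_filter, mem_Jset, mem_Jset, mem_Jset]
            constructor
            · rintro ⟨hj, hk⟩
              exact (hpair j i0 ⟨hj, hk⟩).2
            · intro hk
              exact hpair i0 j ⟨⟨hi0τ, hC0⟩, hk⟩
          rw [hsets]
          refine Finset.sum_congr rfl fun j hj => ?_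
          rw [Finset.insert_comm]
        rw [hT1, hT2]
        exact hlam i0 hi0τ hC0
      · have hT1 : (∑ j ∈ Jset m C τ,
            (if i0 ∈ Jset m C (insert j τ) then W (insert i0 (insert j τ)) else 0) • rayR n m v j)
            = 0 := by
          refine Finset.sum_eq_zero fun j hj => ?_
          rw [mem_Jset] at hj
          rw [if_neg, zero_smul]
          intro hk
          rw [mem_Jset] at hk
          exact hC0 (hpair j i0 ⟨hj, hk⟩).1.2
        have hT2 : (∑ j ∈ Jset m C τ, (lam j * (if j = i0 then 1 else 0)) • rayR n m v j) = 0 := by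
          refine Finset.sum_eq_zero fun j hj => ?_
          rw [mem_Jset] at hj
          rw [if_neg (fun h : j = i0 => hC0 (h ▸ hj.2)), mul_zero, zero_smul]
        rw [hT1, hT2, sub_zero]
        exact Submodule.zero_mem _
  · -- T3 ∈ span
    have hswap : (∑ j ∈ Jset m C τ, f (sdef n m v C W (insert j τ)) • rayR n m v j)
        = ∑ j ∈ Jset m C τ, f (rayR n m v j) • sdef n m v C W (insert j τ) := by
      have hLHS : (∑ j ∈ Jset m C τ, f (sdef n m v C W (insert j τ)) • rayR n m v j)
          = ∑ j : Fin m, ∑ k : Fin m,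
              if (j ∉ τ ∧ insert j τ ∈ C) ∧ (k ∉ insert j τ ∧ insert k (insert j τ) ∈ C)
              then (W (insert k (insert j τ)) * f (rayR n m v k)) • rayR n m v j else 0 := by
        rw [Jset, Finset.sum_filter]
        refine Finset.sum_congr rfl fun j _ => ?_
        by_cases hj : j ∉ τ ∧ insert j τ ∈ C
        · rw [if_pos hj]
          rw [show f (sdef n m v C W (insert j τ))
              = ∑ k ∈ Jset m C (insert j τ), W (insert k (insert j τ)) * f (rayR n m v k) by
            rw [sdef, map_sum]; exact Finset.sum_congr rfl fun k _ => by rw [map_smul, smul_eq_mul]]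
          rw [Finset.sum_smul, Jset, Finset.sum_filter]
          refine Finset.sum_congr rfl fun k _ => ?_
          by_cases hk : k ∉ insert j τ ∧ insert k (insert j τ) ∈ C
          · rw [if_pos hk, if_pos ⟨hj, hk⟩]
          · rw [if_neg hk, if_neg (fun h => hk h.2)]
        · rw [if_neg hj, eq_comm]
          exact Finset.sum_eq_zero fun k _ => if_neg (fun h => hj h.1)
      have hRHS : (∑ j ∈ Jset m C τ, f (rayR n m v j) • sdef n m v C W (insert j τ))
          = ∑ j : Fin m, ∑ k : Fin m,
              if (j ∉ τ ∧ insert j τ ∈ C) ∧ (k ∉ insert j τ ∧ insert k (insert j τ) ∈ C)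
              then f (rayR n m v j) • (W (insert k (insert j τ)) • rayR n m v k) else 0 := by
        rw [Jset, Finset.sum_filter]
        refine Finset.sum_congr rfl fun j _ => ?_
        by_cases hj : j ∉ τ ∧ insert j τ ∈ C
        · rw [if_pos hj, sdef, Finset.smul_sum, Jset, Finset.sum_filter]
          refine Finset.sum_congr rfl fun k _ => ?_
          by_cases hk : k ∉ insert j τ ∧ insert k (insert j τ) ∈ C
          · rw [if_pos hk, if_pos ⟨hj, hk⟩]
          · rw [if_neg hk, if_neg (fun h => hk h.2)]
        · rw [if_neg hj, eq_comm]
          exact Finset.sum_eq_zero fun k _ => if_neg (fun h => hj h.1)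
      rw [hLHS, hRHS, Finset.sum_comm]
      refine Finset.sum_congr rfl fun j _ => Finset.sum_congr rfl fun k _ => ?_
      by_cases h : (j ∉ τ ∧ insert j τ ∈ C) ∧ (k ∉ insert j τ ∧ insert k (insert j τ) ∈ C)
      · rw [if_pos h, if_pos (hpair j k h), Finset.insert_comm, smul_smul, mul_comm]
      · rw [if_neg h, if_neg (fun h' => h (hpair k j h'))]
    have this2 : (∑ j ∈ Jset m C τ,
        (f (sdef n m v C W (insert j τ)) - lam j * f (rayR n m v j)) • rayR n m v j)
        = ∑ j ∈ Jset m C τ,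
            f (rayR n m v j) • (sdef n m v C W (insert j τ) - lam j • rayR n m v j) := by
      calc (∑ j ∈ Jset m C τ,
          (f (sdef n m v C W (insert j τ)) - lam j * f (rayR n m v j)) • rayR n m v j)
          = (∑ j ∈ Jset m C τ, f (sdef n m v C W (insert j τ)) • rayR n m v j)
            - ∑ j ∈ Jset m C τ, (lam j * f (rayR n m v j)) • rayR n m v j := by
            rw [← Finset.sum_sub_distrib]
            exact Finset.sum_congr rfl fun j _ => by rw [sub_smul]
        _ = (∑ j ∈ Jset m C τ, f (rayR n m v j) • sdef n m v C W (insert j τ))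
            - ∑ j ∈ Jset m C τ, f (rayR n m v j) • (lam j • rayR n m v j) := by
            rw [hswap]
            congr 1
            exact Finset.sum_congr rfl fun j _ => by rw [smul_smul, mul_comm]
        _ = ∑ j ∈ Jset m C τ,
              f (rayR n m v j) • (sdef n m v C W (insert j τ) - lam j • rayR n m v j) := by
            rw [← Finset.sum_sub_distrib]
            exact Finset.sum_congr rfl fun j _ => by rw [smul_sub]
    rw [this2]
    refine Submodule.sum_mem _ fun j hj => ?_
    rw [mem_Jset] at hj
    exact Submodule.smul_mem _ _ (hlam j hj.1 hj.2)

/-- auxiliary: the iterated intersection weights from level `t` on -/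
def Ffun (n m d : ℕ) (v : Fin m → Fin n → ℤ) (C : Finset (Finset (Fin m)))
    (ω : Finset (Fin m) → ℤ) (L : Fin d → Finset (Fin m) → ((Fin n → ℝ) →ₗ[ℝ] ℝ))
    (t : ℕ) : Finset (Fin m) → ℝ :=
  ((List.ofFn fun t : Fin d => L t).drop t).foldr (stepW n m v C) (fun T => (ω T : ℝ))

lemma Ffun_last (n m d : ℕ) (v : Fin m → Fin n → ℤ) (C : Finset (Finset (Fin m)))
    (ω : Finset (Fin m) → ℤ) (L : Fin d → Finset (Fin m) → ((Fin n → ℝ) →ₗ[ℝ] ℝ)) :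
    Ffun n m d v C ω L d = fun T => (ω T : ℝ) := by
  rw [Ffun, List.drop_eq_nil_of_le (by simp)]
  rfl

lemma Ffun_step (n m d : ℕ) (v : Fin m → Fin n → ℤ) (C : Finset (Finset (Fin m)))
    (ω : Finset (Fin m) → ℤ) (L : Fin d → Finset (Fin m) → ((Fin n → ℝ) →ₗ[ℝ] ℝ))
    (t : ℕ) (ht : t < d) :
    Ffun n m d v C ω L t = stepW n m v C (L ⟨t, ht⟩) (Ffun n m d v C ω L (t + 1)) := by
  rw [Ffun, Ffun, List.drop_eq_getElem_cons (by simpa using ht), List.foldr_cons]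
  congr 1
  simp

/-- For a maximal cone `σ = ⟨v₁,…,v_d⟩` of a `d`-dimensional tropical fan with unimodular
fan structure, the iterated intersection product `Ψ_{v₁}⋯Ψ_{v_d}·X` of the Courant
functions of the rays of `σ` with the fan is the origin with weight `ω(σ)`. -/
theorem stmt12 (n m d : ℕ) (v : Fin m → Fin n → ℤ) (C : Finset (Finset (Fin m)))
    (ω : Finset (Fin m) → ℤ)
    (hdown : ∀ S ∈ C, ∀ T ⊆ S, T ∈ C)
    (hsimp : ∀ S ∈ C, LinearIndependent ℝ (fun i : {x // x ∈ S} => rayR n m v i.1))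
    (hUni : ∀ S ∈ C, ∃ (b : Module.Basis (Fin n) ℤ (Fin n → ℤ)) (g : Fin m → Fin n),
      ∀ i ∈ S, b (g i) = v i)
    (hdim : ∀ S ∈ C, S.card ≤ d)
    (hpure : ∀ S ∈ C, ∃ T ∈ C, S ⊆ T ∧ T.card = d)
    (hbal : ∀ τ ∈ C, τ.card = d - 1 →
      (∑ j ∈ Finset.univ.filter (fun j => j ∉ τ ∧ insert j τ ∈ C),
          (ω (insert j τ) : ℝ) • rayR n m v j) ∈
        Submodule.span ℝ (Set.range fun i : {x // x ∈ τ} => rayR n m v i.1))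
    (σ : Finset (Fin m)) (hσ : σ ∈ C) (hcard : σ.card = d)
    (ι : Fin d → Fin m) (hinj : Function.Injective ι)
    (himg : Finset.image ι Finset.univ = σ)
    -- the Courant functions `Ψ_{v_t}`, given by their linear parts on the cones of `C`
    (L : Fin d → Finset (Fin m) → ((Fin n → ℝ) →ₗ[ℝ] ℝ))
    (hL : ∀ t : Fin d, ∀ T ∈ C, ∀ j ∈ T,
      L t T (rayR n m v j) = if j = ι t then 1 else 0) :
    ((List.ofFn fun t : Fin d => L t).foldr (stepW n m v C)
        (fun T => (ω T : ℝ))) ∅ = (ω σ : ℝ) := by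
  classical
  set τfun : ℕ → Finset (Fin m) :=
    fun t => (Finset.univ.filter fun s : Fin d => (s : ℕ) < t).image ι with hτfun
  have hτsub : ∀ t, τfun t ⊆ σ := fun t => by
    simp only [hτfun]; rw [← himg]
    exact Finset.image_subset_image (Finset.filter_subset _ _)
  have hτC : ∀ t, τfun t ∈ C := fun t => hdown σ hσ _ (hτsub t)
  have hfiltercard : ∀ t, t ≤ d →
      (Finset.univ.filter fun s : Fin d => (s : ℕ) < t).card = t := by
    intro t ht
    induction t with
    | zero => simp
    | succ t ih =>
      have h1 : (Finset.univ.filter fun s : Fin d => (s : ℕ) < t + 1)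
          = insert (⟨t, by omega⟩ : Fin d)
              (Finset.univ.filter fun s : Fin d => (s : ℕ) < t) := by
        ext s
        simp only [Finset.mem_filter, Finset.mem_insert, Finset.mem_univ, true_and, Fin.ext_iff]
        omega
      rw [h1, Finset.card_insert_of_notMem (by simp), ih (by omega)]
  have hτcard : ∀ t, t ≤ d → (τfun t).card = t := by
    intro t ht
    simp only [hτfun]; rw [Finset.card_image_of_injective _ hinj, hfiltercard t ht]
  have hτins : ∀ t (ht : t < d), insert (ι ⟨t, ht⟩) (τfun t) = τfun (t + 1) := by
    intro t ht
    simp only [hτfun]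
    have h1 : (Finset.univ.filter fun s : Fin d => (s : ℕ) < t + 1)
        = insert (⟨t, ht⟩ : Fin d)
            (Finset.univ.filter fun s : Fin d => (s : ℕ) < t) := by
      ext s
      simp only [Finset.mem_filter, Finset.mem_insert, Finset.mem_univ, true_and, Fin.ext_iff]
      omega
    rw [h1, Finset.image_insert]
  have hιnot : ∀ t (ht : t < d), ι ⟨t, ht⟩ ∉ τfun t := by
    intro t ht hmem
    simp only [hτfun] at hmem
    obtain ⟨s, hs, heq⟩ := Finset.mem_image.1 hmem
    have := hinj heq
    rw [Finset.mem_filter] at hs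
    rw [this] at hs
    exact absurd hs.2 (by simp)
  have hτd : τfun d = σ := by
    simp only [hτfun]
    have : (Finset.univ.filter fun s : Fin d => (s : ℕ) < d) = Finset.univ := by
      ext s; simp [s.isLt]
    rw [this, himg]
  have hτ0 : τfun 0 = ∅ := by
    simp only [hτfun]
    have : (Finset.univ.filter fun s : Fin d => (s : ℕ) < 0) = ∅ := by
      ext s; simp
    rw [this, Finset.image_empty]
  -- balancing of the intermediate fans
  have hbalF : ∀ k t, t + k = d → ∀ τ ∈ C, τ.card + 1 = t →
      sdef n m v C (Ffun n m d v C ω L t) τ ∈ spanRays n m v τ := by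
    intro k
    induction k with
    | zero =>
      intro t htk τ hτ hcardτ
      have ht : t = d := by omega
      subst ht
      rw [Ffun_last]
      exact hbal τ hτ (by omega)
    | succ k ih =>
      intro t htk τ hτ hcardτ
      have ht : t < d := by omega
      rw [Ffun_step n m d v C ω L t ht]
      exact bal_step n m v C hdown hsimp (ι ⟨t, ht⟩) (L ⟨t, ht⟩) (hL ⟨t, ht⟩)
        (Ffun n m d v C ω L (t + 1)) τ hτ
        (fun j hj hjC => ih (t + 1) (by omega) (insert j τ) hjC
          (by rw [Finset.card_insert_of_notMem hj]; omega))
  -- value chain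
  have hval : ∀ k t, t + k = d → Ffun n m d v C ω L t (τfun t) = (ω σ : ℝ) := by
    intro k
    induction k with
    | zero =>
      intro t htk
      have ht : t = d := by omega
      subst ht
      rw [Ffun_last, hτd]
    | succ k ih =>
      intro t htk
      have ht : t < d := by omega
      rw [Ffun_step n m d v C ω L t ht, stepW_eq]
      have h2 : L ⟨t, ht⟩ (τfun t) (sdef n m v C (Ffun n m d v C ω L (t + 1)) (τfun t)) = 0 := by
        have hmem := hbalF k (t + 1) (by omega) (τfun t) (hτC t)
          (by rw [hτcard t (le_of_lt ht)])
        have hle : spanRays n m v (τfun t) ≤ LinearMap.ker (L ⟨t, ht⟩ (τfun t)) := by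
          rw [spanRays, Submodule.span_le]
          rintro y ⟨⟨i, hi⟩, rfl⟩
          have h3 := hL ⟨t, ht⟩ (τfun t) (hτC t) i hi
          have h4 : i ≠ ι ⟨t, ht⟩ := fun h => hιnot t ht (h ▸ hi)
          simp [LinearMap.mem_ker, h3, h4]
        simpa using hle hmem
      rw [h2, sub_zero]
      have hmemJ : ι ⟨t, ht⟩ ∈ Jset m C (τfun t) :=
        mem_Jset.2 ⟨hιnot t ht, by rw [hτins t ht]; exact hτC (t + 1)⟩
      have h1 : (∑ j ∈ Jset m C (τfun t),
          Ffun n m d v C ω L (t + 1) (insert j (τfun t))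
            * L ⟨t, ht⟩ (insert j (τfun t)) (rayR n m v j))
          = Ffun n m d v C ω L (t + 1) (τfun (t + 1)) := by
        calc (∑ j ∈ Jset m C (τfun t),
            Ffun n m d v C ω L (t + 1) (insert j (τfun t))
              * L ⟨t, ht⟩ (insert j (τfun t)) (rayR n m v j))
            = ∑ j ∈ Jset m C (τfun t),
                if j = ι ⟨t, ht⟩ then Ffun n m d v C ω L (t + 1) (insert j (τfun t)) else 0 := by
              refine Finset.sum_congr rfl fun j hj => ?_
              rw [mem_Jset] at hj
              rw [hL ⟨t, ht⟩ _ hj.2 j (Finset.mem_insert_self _ _)]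
              by_cases h : j = ι ⟨t, ht⟩ <;> simp [h]
          _ = if ι ⟨t, ht⟩ ∈ Jset m C (τfun t)
              then Ffun n m d v C ω L (t + 1) (insert (ι ⟨t, ht⟩) (τfun t)) else 0 :=
              Finset.sum_ite_eq' _ _ _
          _ = Ffun n m d v C ω L (t + 1) (τfun (t + 1)) := by
              rw [if_pos hmemJ, hτins t ht]
      rw [h1]
      exact ih (t + 1) (by omega)
  have hfinal := hval d 0 (by omega)
  rw [hτ0] at hfinal
  exact hfinal
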